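/- Let Ξ be the combination of balanced-exchange and school-level diversity policies: Ξ = {ξ : p_c^t ≤ ξ_c^t ≤ q_c^t for all (c,t), and ∑_t ∑_{c with d(c)=d} ξ_c^t = k_d for all districts d}. Then Ξ ∩ Ξ⁰ is an M-convex set. -/
import Mathlib


open Finset

/-- Move one unit from coordinate `i` to coordinate `j`:  ξ - χ_i + χ_j. -/
def move {ι : Type*} [DecidableEq ι] (ξ : ι → ℕ) (i j : ι) : ι → ℕ :=
  fun k => ξ k - (if k = i then 1 else 0) + (if k = j then 1 else 0)

/-- A set of distributions is M-convex. -/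
def MConvex {ι : Type*} [DecidableEq ι] (S : Set (ι → ℕ)) : Prop :=
  ∀ ξ ∈ S, ∀ ξ' ∈ S, ∀ i, ξ' i < ξ i →
    ∃ j, ξ j < ξ' j ∧ move ξ i j ∈ S ∧ move ξ' j i ∈ S

/-- The set Ξ⁰ of distributions with total sum `N` respecting the school
capacities `q`. -/
def Xi0 {C T : Type*} [Fintype C] [Fintype T] (N : ℕ) (q : C → ℕ) :
    Set (C × T → ℕ) :=
  {ξ | (∑ p, ξ p = N) ∧ ∀ c, ∑ t, ξ (c, t) ≤ q c}

lemma move_point {ι : Type*} [DecidableEq ι] (ξ : ι → ℕ) {i j : ι}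
    (hij : i ≠ j) (hi : 1 ≤ ξ i) (x : ι) :
    move ξ i j x + (if x = i then 1 else 0) = ξ x + (if x = j then 1 else 0) := by
  unfold move
  split_ifs with h1 h2 h2 <;> subst_eqs <;> omega

lemma sum_move {ι : Type*} [DecidableEq ι] (ξ : ι → ℕ) {i j : ι}
    (hij : i ≠ j) (hi : 1 ≤ ξ i) (s : Finset ι) :
    (∑ x ∈ s, move ξ i j x) + (if i ∈ s then 1 else 0)
      = (∑ x ∈ s, ξ x) + (if j ∈ s then 1 else 0) := by
  have h : ∑ x ∈ s, (move ξ i j x + (if x = i then 1 else 0))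
      = ∑ x ∈ s, (ξ x + (if x = j then 1 else 0)) :=
    Finset.sum_congr rfl fun x _ => move_point ξ hij hi x
  simpa [Finset.sum_add_distrib, Finset.sum_ite_eq'] using h

lemma sum_move_fiber {C T : Type*} [Fintype T] [DecidableEq C] [DecidableEq T]
    (ξ : C × T → ℕ) {i j : C × T} (hij : i ≠ j) (hi : 1 ≤ ξ i) (s : Finset C) :
    (∑ c ∈ s, ∑ t, move ξ i j (c, t)) + (if i.1 ∈ s then 1 else 0)
      = (∑ c ∈ s, ∑ t, ξ (c, t)) + (if j.1 ∈ s then 1 else 0) := by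
  have h := sum_move ξ hij hi (s ×ˢ univ)
  simpa [Finset.sum_product, Finset.mem_product] using h

lemma move_mem {C T D : Type*} [Fintype C] [Fintype T] [Fintype D]
    [DecidableEq C] [DecidableEq T] [DecidableEq D]
    (q : C → ℕ) (dc : C → D) (k : D → ℕ) (p qct : C → T → ℕ)
    (ξ : C × T → ℕ) (i j : C × T)
    (hb : ∀ c t, p c t ≤ ξ (c, t) ∧ ξ (c, t) ≤ qct c t)
    (hd : ∀ d, ∑ c ∈ univ.filter (fun c => dc c = d), ∑ t, ξ (c, t) = k d)
    (hN : ∑ x, ξ x = ∑ d, k d)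
    (hq : ∀ c, ∑ t, ξ (c, t) ≤ q c)
    (hij : i ≠ j) (hpi : p i.1 i.2 < ξ i) (hqj : ξ j < qct j.1 j.2)
    (hdd : dc j.1 = dc i.1)
    (hcap : j.1 = i.1 ∨ ∑ t, ξ (j.1, t) < q j.1) :
    move ξ i j ∈ ({ξ : C × T → ℕ |
        (∀ c t, p c t ≤ ξ (c, t) ∧ ξ (c, t) ≤ qct c t) ∧
        ∀ d, ∑ c ∈ univ.filter (fun c => dc c = d), ∑ t, ξ (c, t) = k d}
      ∩ Xi0 (T := T) (∑ d, k d) q) := by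
  have hi : 1 ≤ ξ i := by omega
  refine ⟨⟨?_, ?_⟩, ?_, ?_⟩
  · -- bounds
    obtain ⟨ci, ti⟩ := i
    obtain ⟨cj, tj⟩ := j
    dsimp only at hpi hqj
    intro c t
    have h1 := hb c t
    unfold move
    split_ifs with hA hB hB
    · exact absurd (hA.symm.trans hB) hij
    · rw [Prod.mk.injEq] at hA
      obtain ⟨rfl, rfl⟩ := hA
      omega
    · rw [Prod.mk.injEq] at hB
      obtain ⟨rfl, rfl⟩ := hB
      omega
    · omega
  · -- district sums
    intro d'
    have h := sum_move_fiber ξ hij hi (univ.filter (fun c => dc c = d'))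
    have h2 := hd d'
    simp only [Finset.mem_filter, Finset.mem_univ, true_and, hdd] at h
    split_ifs at h <;> omega
  · -- total sum
    have h := sum_move ξ hij hi (univ : Finset (C × T))
    simp only [Finset.mem_univ, if_true] at h
    show ∑ x, move ξ i j x = ∑ d, k d
    omega
  · -- capacities
    intro c'
    have h := sum_move_fiber ξ hij hi ({c'} : Finset C)
    simp only [Finset.sum_singleton, Finset.mem_singleton] at h
    have hq1 := hq c'
    rcases hcap with hc | hc
    · rw [hc] at h
      split_ifs at h <;> omega
    · by_cases hjc : j.1 = c'
      · subst hjc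
        by_cases hic : i.1 = j.1
        · rw [hic] at h
          split_ifs at h <;> omega
        · rw [if_neg hic, if_pos rfl] at h
          omega
      · rw [if_neg hjc] at h
        split_ifs at h <;> omega

/-- For the combination of the balanced-exchange and the school-level
diversity policies, `Ξ ∩ Ξ⁰` is an M-convex set. -/
theorem combination_MConvex
    {C T D : Type*} [Fintype C] [Fintype T] [Fintype D]
    [DecidableEq C] [DecidableEq T] [DecidableEq D]
    (q : C → ℕ) (dc : C → D) (k : D → ℕ) (p qct : C → T → ℕ) :
    MConvex ({ξ : C × T → ℕ |
        (∀ c t, p c t ≤ ξ (c, t) ∧ ξ (c, t) ≤ qct c t) ∧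
        ∀ d, ∑ c ∈ univ.filter (fun c => dc c = d), ∑ t, ξ (c, t) = k d}
      ∩ Xi0 (T := T) (∑ d, k d) q) := by
  rintro ξ ⟨⟨hb, hd⟩, hN, hq⟩ ξ' ⟨⟨hb', hd'⟩, hN', hq'⟩ ⟨c, t⟩ hlt
  by_cases hcase : ∃ t', ξ (c, t') < ξ' (c, t')
  · obtain ⟨t', ht'⟩ := hcase
    have htt : t ≠ t' := by rintro rfl; omega
    have hij : ((c, t) : C × T) ≠ (c, t') := by simp [htt]
    refine ⟨(c, t'), ht', ?_, ?_⟩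
    · exact move_mem q dc k p qct ξ (c, t) (c, t') hb hd hN hq hij
        (lt_of_le_of_lt (hb' c t).1 hlt) (lt_of_lt_of_le ht' (hb' c t').2)
        rfl (Or.inl rfl)
    · exact move_mem q dc k p qct ξ' (c, t') (c, t) hb' hd' hN' hq' hij.symm
        (lt_of_le_of_lt (hb c t').1 ht') (lt_of_lt_of_le hlt (hb c t).2)
        rfl (Or.inl rfl)
  · push_neg at hcase
    have hs : ∑ t'', ξ' (c, t'') < ∑ t'', ξ (c, t'') :=
      Finset.sum_lt_sum (fun x _ => hcase x) ⟨t, Finset.mem_univ t, hlt⟩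
    have hex : ∃ c₂ ∈ univ.filter (fun c' => dc c' = dc c),
        c₂ ≠ c ∧ ∑ t'', ξ (c₂, t'') < ∑ t'', ξ' (c₂, t'') := by
      by_contra hcon
      push_neg at hcon
      have hlt2 : ∑ c' ∈ univ.filter (fun c' => dc c' = dc c), ∑ t'', ξ' (c', t'')
          < ∑ c' ∈ univ.filter (fun c' => dc c' = dc c), ∑ t'', ξ (c', t'') := by
        refine Finset.sum_lt_sum (fun c' hc' => ?_) ⟨c, by simp, hs⟩
        by_cases hcc : c' = c
        · subst hcc; exact le_of_lt hs
        · exact hcon c' hc' hcc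
      rw [hd (dc c), hd' (dc c)] at hlt2
      omega
    obtain ⟨c₂, hc₂mem, hc₂ne, hc₂lt⟩ := hex
    have hdc₂ : dc c₂ = dc c := by
      simpa using hc₂mem
    have ht₂ : ∃ t₂, ξ (c₂, t₂) < ξ' (c₂, t₂) := by
      by_contra hcon
      push_neg at hcon
      exact absurd (Finset.sum_le_sum (fun x _ => hcon x)) (not_le.mpr hc₂lt)
    obtain ⟨t₂, ht₂⟩ := ht₂
    have hij : ((c, t) : C × T) ≠ (c₂, t₂) := by
      simp [hc₂ne.symm]
    refine ⟨(c₂, t₂), ht₂, ?_, ?_⟩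
    · exact move_mem q dc k p qct ξ (c, t) (c₂, t₂) hb hd hN hq hij
        (lt_of_le_of_lt (hb' c t).1 hlt) (lt_of_lt_of_le ht₂ (hb' c₂ t₂).2)
        hdc₂ (Or.inr (lt_of_lt_of_le hc₂lt (hq' c₂)))
    · exact move_mem q dc k p qct ξ' (c₂, t₂) (c, t) hb' hd' hN' hq' hij.symm
        (lt_of_le_of_lt (hb c₂ t₂).1 ht₂) (lt_of_lt_of_le hlt (hb c t).2)
        hdc₂.symm (Or.inr (lt_of_lt_of_le hs (hq c)))
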